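/- arXiv:2004.09335 — 2 statements merged into one kernel-verified Lean document; each statement's English description precedes it below -/
import Mathlib

section
/- (Key identity behind Proposition 2.) Suppose X ⊆ ℝ^d, each score function x ↦ ∂_j^θ log p(θ,x) is twice differentiable in x, and q : X → ℝ (playing the role of the formal adjoint G^a[p(θ,·)] in L²(X,λ)) satisfies the adjoint identity ∫_X G[∂_j^θ log p(θ,·)](x) p(θ,x) dλ(x) = ∫_X ∂_j^θ log p(θ,x) q(x) dλ(x) for each j, with ∫_X |q(x)/p(θ,x) · ∂_j^θ log p(θ,x)| p(θ,x) dλ(x) < ∞. Then the projection of the square-root Fokker–Planck vector field v(x) = q(x)/(2√p(θ,x)) satisfies, pointwise in x, Π_θ v(x) = Σ_{i,j} (g⁻¹(θ))_{ij} E_θ[G[∂_j^θ log p(θ,·)]] ∂_i^θ √p(θ,x); that is, the projection filter parameter velocity is g⁻¹(θ) E_θ[G[∇_θ log p_θ]]. -/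
open MeasureTheory

/-- The generator of the Itô diffusion with drift `a` and diffusion matrix `Q`:
`G[φ](x) = Σ_i a_i(x) ∂_i φ(x) + (1/2) Σ_{i,j} Q_{ij}(x) ∂²_{ij} φ(x)`. -/
noncomputable def generator {d : ℕ} (a : (Fin d → ℝ) → Fin d → ℝ)
    (Q : (Fin d → ℝ) → Matrix (Fin d) (Fin d) ℝ)
    (φ : (Fin d → ℝ) → ℝ) (x : Fin d → ℝ) : ℝ :=
  (∑ i, a x i * fderiv ℝ φ x (Pi.single i 1)) +
    (1 / 2) * ∑ i, ∑ j, Q x i j *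
      fderiv ℝ (fun y => fderiv ℝ φ y (Pi.single j 1)) x (Pi.single i 1)

/-- **key identity behind Proposition 2.** If `q` plays the role of the
formal adjoint `G^a[p(θ,·)]` in `L²(X,λ)`, i.e.
`∫ G[∂_j^θ log p(θ,·)] p(θ,·) dλ = ∫ ∂_j^θ log p(θ,·) q dλ` for each `j`,
then the projection of the square-root Fokker–Planck vector field
`v = q/(2√p(θ,·))` satisfies, pointwise,
`Π_θ v = Σ_{i,j} (g⁻¹(θ))_{ij} E_θ[G[∂_j^θ log p_θ]] ∂_i^θ √p_θ`;
i.e. the projection filter parameter velocity is `g⁻¹(θ) E_θ[G[∇_θ log p_θ]]`. -/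
theorem projection_filter_prediction_identity
    {X : Type*} [MeasurableSpace X] {d m : ℕ}
    (lam : Measure (Fin d → ℝ))
    (a : (Fin d → ℝ) → Fin d → ℝ)
    (Q : (Fin d → ℝ) → Matrix (Fin d) (Fin d) ℝ)
    (p : (Fin m → ℝ) → (Fin d → ℝ) → ℝ)
    (hpos : ∀ θ x, 0 < p θ x)
    (hprob : ∀ θ, ∫ x, p θ x ∂lam = 1)
    (hdiff : ∀ x, Differentiable ℝ (fun θ => p θ x))
    (θ : Fin m → ℝ)
    -- each score function is twice differentiable in x
    (hscore : ∀ j : Fin m, ContDiff ℝ 2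
      (fun x => fderiv ℝ (fun η => Real.log (p η x)) θ (Pi.single j 1)))
    -- the Fisher information matrix, assumed invertible at θ
    (g : Matrix (Fin m) (Fin m) ℝ)
    (hg : ∀ i j, g i j =
      ∫ x, (fderiv ℝ (fun η => Real.log (p η x)) θ (Pi.single i 1)) *
           (fderiv ℝ (fun η => Real.log (p η x)) θ (Pi.single j 1)) * p θ x ∂lam)
    (hginv : IsUnit g.det)
    -- `q` plays the role of the formal adjoint `G^a[p(θ,·)]` in `L²(X,λ)`
    (q : (Fin d → ℝ) → ℝ)
    (hadj : ∀ j : Fin m,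
      ∫ x, generator a Q
          (fun z => fderiv ℝ (fun η => Real.log (p η z)) θ (Pi.single j 1)) x * p θ x ∂lam
        = ∫ x, fderiv ℝ (fun η => Real.log (p η x)) θ (Pi.single j 1) * q x ∂lam)
    (hint : ∀ j : Fin m, Integrable
      (fun x => |q x / p θ x * fderiv ℝ (fun η => Real.log (p η x)) θ (Pi.single j 1)|
        * p θ x) lam)
    (v : (Fin d → ℝ) → ℝ)
    (hv : ∀ x, v x = q x / (2 * Real.sqrt (p θ x)))
    (x : Fin d → ℝ) :
    (4 : ℝ) * ∑ i : Fin m, ∑ j : Fin m, g⁻¹ i j *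
        (∫ z, v z * fderiv ℝ (fun η => Real.sqrt (p η z)) θ (Pi.single j 1) ∂lam) *
        fderiv ℝ (fun η => Real.sqrt (p η x)) θ (Pi.single i 1)
      = ∑ i : Fin m, ∑ j : Fin m, g⁻¹ i j *
        (∫ z, generator a Q
            (fun w => fderiv ℝ (fun η => Real.log (p η w)) θ (Pi.single j 1)) z
          * p θ z ∂lam) *
        fderiv ℝ (fun η => Real.sqrt (p η x)) θ (Pi.single i 1) := by
  have key : ∀ j : Fin m,
      (4:ℝ) * ∫ z, v z * fderiv ℝ (fun η => Real.sqrt (p η z)) θ (Pi.single j 1) ∂lam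
      = ∫ z, generator a Q
          (fun w => fderiv ℝ (fun η => Real.log (p η w)) θ (Pi.single j 1)) z
          * p θ z ∂lam := by
    intro j
    rw [hadj j, ← MeasureTheory.integral_const_mul]
    congr 1
    ext z
    have hp := hpos θ z
    have hL := (hdiff z θ).hasFDerivAt
    have hsqrt : fderiv ℝ (fun η => Real.sqrt (p η z)) θ =
        (1 / (2 * Real.sqrt (p θ z))) • fderiv ℝ (fun η => p η z) θ :=
      ((Real.hasDerivAt_sqrt hp.ne').comp_hasFDerivAt θ hL).fderiv
    have hlog : fderiv ℝ (fun η => Real.log (p η z)) θ =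
        (p θ z)⁻¹ • fderiv ℝ (fun η => p η z) θ :=
      by have h := ((Real.hasDerivAt_log hp.ne').comp_hasFDerivAt θ hL).fderiv; exact h
    rw [hsqrt, hlog, hv z]
    simp only [ContinuousLinearMap.smul_apply, smul_eq_mul]
    have hs : (0:ℝ) < Real.sqrt (p θ z) := Real.sqrt_pos.mpr hp
    have hss : Real.sqrt (p θ z) * Real.sqrt (p θ z) = p θ z := Real.mul_self_sqrt hp.le
    field_simp
    linear_combination (-4) * q z * (fderiv ℝ (fun η => p η z) θ) (Pi.single j 1) * hss
  rw [Finset.mul_sum]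
  refine Finset.sum_congr rfl fun i _ => ?_
  rw [Finset.mul_sum]
  refine Finset.sum_congr rfl fun j _ => ?_
  rw [← key j]
  ring
end

section
/- For every θ ∈ ℝ³ with θ ≠ 0, the Fisher information matrix of the von Mises–Fisher family, g(θ) = (κ'(r)/r) P⊥(θ) + κ''(r) P(θ) with r = ‖θ‖, is symmetric positive definite. -/
lemma sinh_lt_mul_cosh {x : ℝ} (hx : 0 < x) : Real.sinh x < x * Real.cosh x := by
  have key : StrictMonoOn (fun y : ℝ => y * Real.cosh y - Real.sinh y) (Set.Ici 0) := by
    apply strictMonoOn_of_deriv_pos (convex_Ici 0)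
    · exact (continuous_id.mul Real.continuous_cosh).sub Real.continuous_sinh |>.continuousOn
    · intro y hy
      rw [interior_Ici] at hy
      have hd : HasDerivAt (fun y : ℝ => y * Real.cosh y - Real.sinh y)
          (1 * Real.cosh y + y * Real.sinh y - Real.cosh y) y :=
        ((hasDerivAt_id y).mul (Real.hasDerivAt_cosh y)).sub (Real.hasDerivAt_sinh y)
      rw [hd.deriv]
      have : 0 < y * Real.sinh y := mul_pos hy (Real.sinh_pos_iff.mpr hy)
      linarith
  have h0 : (0 : ℝ) * Real.cosh 0 - Real.sinh 0 < x * Real.cosh x - Real.sinh x :=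
    key (Set.self_mem_Ici) (Set.mem_Ici.mpr hx.le) hx
  simp [Real.sinh_zero] at h0
  linarith

/-- For every `θ ∈ ℝ³`, `θ ≠ 0`, the Fisher information matrix of the
von Mises–Fisher family, `g(θ) = (κ'(r)/r) P⊥(θ) + κ''(r) P(θ)` with `r = ‖θ‖`,
`κ'(r) = coth r − 1/r` and `κ''(r) = 1/r² − 1/sinh²r`, is symmetric positive definite. -/
theorem vmf_fisher_posdef
    (θ : EuclideanSpace ℝ (Fin 3)) (hθ : θ ≠ 0)
    (P Pperp g : Matrix (Fin 3) (Fin 3) ℝ)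
    (hP : P = Matrix.of fun i j => θ i * θ j / ‖θ‖ ^ 2)
    (hPperp : Pperp = 1 - P)
    (hgdef : g = ((Real.cosh ‖θ‖ / Real.sinh ‖θ‖ - 1 / ‖θ‖) / ‖θ‖) • Pperp
      + (1 / ‖θ‖ ^ 2 - 1 / Real.sinh ‖θ‖ ^ 2) • P) :
    g.IsSymm ∧ g.PosDef := by
  set r := ‖θ‖ with hr
  have hr0 : 0 < r := norm_pos_iff.mpr hθ
  have hsinh : 0 < Real.sinh r := Real.sinh_pos_iff.mpr hr0
  have hrs : r < Real.sinh r := Real.self_lt_sinh_iff.mpr hr0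
  -- positivity of coefficients
  set a : ℝ := (Real.cosh r / Real.sinh r - 1 / r) / r with ha_def
  set b : ℝ := 1 / r ^ 2 - 1 / Real.sinh r ^ 2 with hb_def
  have ha : 0 < a := by
    apply div_pos _ hr0
    rw [sub_pos, div_lt_div_iff₀ hr0 hsinh]
    have := sinh_lt_mul_cosh hr0
    linarith
  have hb : 0 < b := by
    rw [hb_def, sub_pos]
    apply one_div_lt_one_div_of_lt (by positivity)
    exact pow_lt_pow_left₀ hrs hr0.le (by norm_num)
  -- symmetry
  have hPsymm : P.IsSymm := by
    rw [hP, Matrix.IsSymm]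
    ext i j
    simp [Matrix.transpose_apply, mul_comm]
  have hgsymm : g.IsSymm := by
    rw [hgdef, hPperp, Matrix.IsSymm, Matrix.transpose_add, Matrix.transpose_smul,
      Matrix.transpose_smul, Matrix.transpose_sub, Matrix.transpose_one, hPsymm]
  refine ⟨hgsymm, Matrix.posDef_iff_dotProduct_mulVec.mpr ⟨?_, ?_⟩⟩
  · rw [Matrix.IsHermitian]
    simpa [Matrix.IsSymm] using hgsymm
  · intro x hx
    have hθsq : ∑ i : Fin 3, θ i ^ 2 = r ^ 2 := by
      rw [hr, EuclideanSpace.norm_eq]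
      rw [Real.sq_sqrt (by positivity)]
      congr 1; ext i; rw [Real.norm_eq_abs, sq_abs]
    -- quadratic form value
    set t : ℝ := ∑ i : Fin 3, θ i * x i with ht_def
    set n : ℝ := ∑ i : Fin 3, x i ^ 2 with hn_def
    have hquad : dotProduct (star x) (g.mulVec x) = a * (n - t ^ 2 / r ^ 2) + b * (t ^ 2 / r ^ 2) := by
      subst hgdef hPperp hP
      simp only [dotProduct, Matrix.mulVec, Matrix.add_apply, Matrix.smul_apply,
        Matrix.sub_apply, Matrix.one_apply, Matrix.of_apply,
        Pi.star_apply, star_trivial, smul_eq_mul, Fin.sum_univ_three]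
      norm_num [Fin.ext_iff]
      rw [ht_def, hn_def, Fin.sum_univ_three, Fin.sum_univ_three]
      field_simp
      ring
    have hn0 : 0 < n := by
      rcases Function.ne_iff.mp hx with ⟨i, hi⟩
      have hi' : x i ≠ 0 := by simpa using hi
      have : 0 < x i ^ 2 := by positivity
      have hle : x i ^ 2 ≤ n := by
        rw [hn_def]
        exact Finset.single_le_sum (fun j _ => sq_nonneg (x j)) (Finset.mem_univ i)
      linarith
    have hcs : t ^ 2 ≤ r ^ 2 * n := by
      have h := Finset.sum_mul_sq_le_sq_mul_sq Finset.univ (fun i => θ i) x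
      rw [ht_def, hn_def]
      calc (∑ i : Fin 3, θ i * x i) ^ 2 ≤ (∑ i : Fin 3, θ i ^ 2) * ∑ i : Fin 3, x i ^ 2 := h
        _ = r ^ 2 * ∑ i : Fin 3, x i ^ 2 := by rw [hθsq]
    rw [hquad]
    set s : ℝ := t ^ 2 / r ^ 2 with hs_def
    have hs0 : 0 ≤ s := by positivity
    have hsn : s ≤ n := by
      rw [hs_def, div_le_iff₀ (by positivity)]
      linarith [hcs]
    rcases eq_or_lt_of_le hs0 with h | h
    · have : a * (n - s) > 0 := mul_pos ha (by linarith)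
      nlinarith
    · have h1 : 0 ≤ a * (n - s) := mul_nonneg ha.le (by linarith)
      have h2 : 0 < b * s := mul_pos hb h
      linarith
end
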